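/- Let U ⊆ ℝ² be a connected open set, let a₁, a₂, b₁, b₂ : U → ℝ be continuously differentiable, and let T, S : U → ℝ be twice continuously differentiable functions each satisfying the system ∂F/∂x = F·a₁ + b₁ and ∂F/∂y = F·a₂ + b₂ on U. If p ∈ U is a point with T(p) ≠ S(p), then at p one has ∂a₁/∂y = ∂a₂/∂x and ∂b₁/∂y − ∂b₂/∂x + a₁·b₂ − a₂·b₁ = 0. -/

import Mathlib

/-- Partial derivative in the first coordinate direction. -/
noncomputable def pdx (f : ℝ × ℝ → ℝ) (p : ℝ × ℝ) : ℝ := fderiv ℝ f p (1, 0)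

/-- Partial derivative in the second coordinate direction. -/
noncomputable def pdy (f : ℝ × ℝ → ℝ) (p : ℝ × ℝ) : ℝ := fderiv ℝ f p (0, 1)

lemma key_compat (U : Set (ℝ × ℝ)) (hU : IsOpen U)
    (a c b d F : ℝ × ℝ → ℝ)
    (ha : ContDiffOn ℝ 1 a U) (hc : ContDiffOn ℝ 1 c U)
    (hb : ContDiffOn ℝ 1 b U) (hd : ContDiffOn ℝ 1 d U)
    (hF : ContDiffOn ℝ 2 F U)
    (hFx : ∀ q ∈ U, pdx F q = F q * a q + b q)
    (hFy : ∀ q ∈ U, pdy F q = F q * c q + d q)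
    (p : ℝ × ℝ) (hp : p ∈ U) :
    F p * (pdy a p - pdx c p)
      + (pdy b p - pdx d p + a p * d p - c p * b p) = 0 := by
  have hUp : U ∈ nhds p := hU.mem_nhds hp
  have hF2 : ContDiffAt ℝ 2 F p := hF.contDiffAt hUp
  have haD : DifferentiableAt ℝ a p := (ha.contDiffAt hUp).differentiableAt one_ne_zero
  have hcD : DifferentiableAt ℝ c p := (hc.contDiffAt hUp).differentiableAt one_ne_zero
  have hbD : DifferentiableAt ℝ b p := (hb.contDiffAt hUp).differentiableAt one_ne_zero
  have hdD : DifferentiableAt ℝ d p := (hd.contDiffAt hUp).differentiableAt one_ne_zero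
  have hFD : DifferentiableAt ℝ F p := hF2.differentiableAt (by norm_num)
  have hF'D : DifferentiableAt ℝ (fderiv ℝ F) p :=
    (hF2.fderiv_right (m := 1) (by norm_num)).differentiableAt one_ne_zero
  set A := fderiv ℝ (fderiv ℝ F) p with hA
  -- derivative of the evaluated fderiv in a fixed direction
  have heval : ∀ v : ℝ × ℝ, fderiv ℝ (fun q => fderiv ℝ F q v) p = A.flip v := by
    intro v
    have := fderiv_clm_apply (c := fderiv ℝ F) (u := fun _ => v) hF'D
      (differentiableAt_const v)
    simp [fderiv_const] at this
    exact this
  -- congruence with the right-hand sides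
  have hx_eq : fderiv ℝ (pdx F) p = fderiv ℝ (fun q => F q * a q + b q) p := by
    apply Filter.EventuallyEq.fderiv_eq
    filter_upwards [hUp] with q hq using hFx q hq
  have hy_eq : fderiv ℝ (pdy F) p = fderiv ℝ (fun q => F q * c q + d q) p := by
    apply Filter.EventuallyEq.fderiv_eq
    filter_upwards [hUp] with q hq using hFy q hq
  have hmulx : fderiv ℝ (fun q => F q * a q + b q) p
      = (F p • fderiv ℝ a p + a p • fderiv ℝ F p) + fderiv ℝ b p := by
    rw [fderiv_fun_add (f := fun q => F q * a q) ((hFD.mul haD)) hbD, fderiv_fun_mul hFD haD]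
  have hmuly : fderiv ℝ (fun q => F q * c q + d q) p
      = (F p • fderiv ℝ c p + c p • fderiv ℝ F p) + fderiv ℝ d p := by
    rw [fderiv_fun_add (f := fun q => F q * c q) ((hFD.mul hcD)) hdD, fderiv_fun_mul hFD hcD]
  -- symmetry of the second derivative
  have hsymm : A (1,0) (0,1) = A (0,1) (1,0) :=
    hF2.isSymmSndFDerivAt (by simp) _ _
  -- compute pdy (pdx F) p two ways
  have e1 : A (0,1) (1,0)
      = F p * pdy a p + a p * (F p * c p + d p) + pdy b p := by
    have h1 : fderiv ℝ (pdx F) p (0,1) = A (0,1) (1,0) := by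
      have : fderiv ℝ (pdx F) p = A.flip (1,0) := heval (1,0)
      rw [this]; rfl
    rw [hx_eq, hmulx] at h1
    simp only [ContinuousLinearMap.add_apply, ContinuousLinearMap.smul_apply,
      smul_eq_mul] at h1
    rw [← h1, ← hFy p hp]
    simp [pdy]
  have e2 : A (1,0) (0,1)
      = F p * pdx c p + c p * (F p * a p + b p) + pdx d p := by
    have h1 : fderiv ℝ (pdy F) p (1,0) = A (1,0) (0,1) := by
      have : fderiv ℝ (pdy F) p = A.flip (0,1) := heval (0,1)
      rw [this]; rfl
    rw [hy_eq, hmuly] at h1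
    simp only [ContinuousLinearMap.add_apply, ContinuousLinearMap.smul_apply,
      smul_eq_mul] at h1
    rw [← h1, ← hFx p hp]
    simp [pdx]
  have := e1.symm.trans (hsymm.symm.trans e2)
  linear_combination this

/-- Necessity in the integrability criterion of Theorem 3.5: if the total differential
system `∂F/∂x = F a₁ + b₁`, `∂F/∂y = F a₂ + b₂` admits two solutions `T`, `S` with
`T(p) ≠ S(p)` at some point `p` of a connected open set `U`, then at `p` the
integrability conditions `dγ¹ = 0` and `dγ² = γ¹ ∧ γ²` hold. -/
theorem integrability_conditions_of_two_solutions
    (U : Set (ℝ × ℝ)) (hU : IsOpen U) (hUconn : IsConnected U)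
    (a₁ a₂ b₁ b₂ : ℝ × ℝ → ℝ)
    (ha₁ : ContDiffOn ℝ 1 a₁ U) (ha₂ : ContDiffOn ℝ 1 a₂ U)
    (hb₁ : ContDiffOn ℝ 1 b₁ U) (hb₂ : ContDiffOn ℝ 1 b₂ U)
    (T S : ℝ × ℝ → ℝ) (hT : ContDiffOn ℝ 2 T U) (hS : ContDiffOn ℝ 2 S U)
    (hTx : ∀ p ∈ U, pdx T p = T p * a₁ p + b₁ p)
    (hTy : ∀ p ∈ U, pdy T p = T p * a₂ p + b₂ p)
    (hSx : ∀ p ∈ U, pdx S p = S p * a₁ p + b₁ p)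
    (hSy : ∀ p ∈ U, pdy S p = S p * a₂ p + b₂ p)
    (p : ℝ × ℝ) (hp : p ∈ U) (hTS : T p ≠ S p) :
    pdy a₁ p = pdx a₂ p ∧
      pdy b₁ p - pdx b₂ p + a₁ p * b₂ p - a₂ p * b₁ p = 0 := by
  have hT0 := key_compat U hU a₁ a₂ b₁ b₂ T ha₁ ha₂ hb₁ hb₂ hT hTx hTy p hp
  have hS0 := key_compat U hU a₁ a₂ b₁ b₂ S ha₁ ha₂ hb₁ hb₂ hS hSx hSy p hp
  have hdiff : (T p - S p) * (pdy a₁ p - pdx a₂ p) = 0 := by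
    linear_combination hT0 - hS0
  have h1 : pdy a₁ p = pdx a₂ p := by
    rcases mul_eq_zero.mp hdiff with h | h
    · exact absurd (sub_eq_zero.mp h) hTS
    · linarith [sub_eq_zero.mp h]
  refine ⟨h1, ?_⟩
  rw [h1] at hT0
  linear_combination hT0
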